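/- BShap satisfies Demand Monotonicity: suppose f : (N → ℝ) → ℝ is nondecreasing in feature i, i.e., a ≤ b implies f(y with coordinate i set to a) ≤ f(y with coordinate i set to b) for all y. If explicands x and x̂ agree on all features except i and x i ≤ x̂ i, then for every baseline x', bs_i(x, x', f) ≤ bs_i(x̂, x', f). -/
import Mathlib

open scoped Classical

noncomputable def shapley {N : Type*} [Fintype N] [DecidableEq N]
    (v : Finset N → ℝ) (i : N) : ℝ :=
  ∑ S ∈ (Finset.univ.erase i).powerset,
    ((S.card.factorial : ℝ) * ((Fintype.card N - S.card - 1).factorial) /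
      (Fintype.card N).factorial) * (v (insert i S) - v S)


noncomputable def bshap {N : Type*} [Fintype N] [DecidableEq N]
    (x x' : N → ℝ) (f : (N → ℝ) → ℝ) (i : N) : ℝ :=
  shapley (fun S => f (fun j => if j ∈ S then x j else x' j)) i


/-- **BShap satisfies Demand Monotonicity**: if `f` is nondecreasing in
feature `i`, then increasing the explicand's value of feature `i` (holding all
else fixed) can only increase feature `i`'s attribution. -/
theorem bshap_demand_monotonicity {N : Type*} [Fintype N] [DecidableEq N]
    (f : (N → ℝ) → ℝ) (i : N)
    (hmono : ∀ (y : N → ℝ) (a b : ℝ), a ≤ b →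
      f (Function.update y i a) ≤ f (Function.update y i b))
    (x xhat x' : N → ℝ)
    (hagree : ∀ j, j ≠ i → x j = xhat j)
    (hle : x i ≤ xhat i) :
    bshap x x' f i ≤ bshap xhat x' f i := by
  unfold bshap shapley
  apply Finset.sum_le_sum
  intro S hS
  rw [Finset.mem_powerset] at hS
  have hiS : i ∉ S := fun h => (Finset.mem_erase.mp (hS h)).1 rfl
  -- the off sets agree
  have hSeq : (fun j => if j ∈ S then x j else x' j)
      = (fun j => if j ∈ S then xhat j else x' j) := by
    funext j
    by_cases hj : j ∈ S
    · simp [hj, hagree j (fun h => hiS (h ▸ hj))]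
    · simp [hj]
  have hins : ∀ (z : N → ℝ), (fun j => if j ∈ insert i S then z j else x' j)
      = Function.update (fun j => if j ∈ S then z j else x' j) i (z i) := by
    intro z
    funext j
    by_cases hj : j = i
    · subst hj; simp
    · simp [Function.update_of_ne hj, Finset.mem_insert, hj]
  have h1 : f (fun j => if j ∈ insert i S then x j else x' j)
      ≤ f (fun j => if j ∈ insert i S then xhat j else x' j) := by
    rw [hins x, hins xhat]
    have : Function.update (fun j => if j ∈ S then xhat j else x' j) i (xhat i)
        = Function.update (fun j => if j ∈ S then x j else x' j) i (xhat i) := by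
      rw [hSeq]
    rw [this]
    exact hmono _ _ _ hle
  have hcoef : (0:ℝ) ≤ ((S.card.factorial : ℝ) * ((Fintype.card N - S.card - 1).factorial) /
      (Fintype.card N).factorial) := by positivity
  apply mul_le_mul_of_nonneg_left _ hcoef
  simp only [hSeq]
  linarith
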